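/- For C ≥ 2, ρ₂ > C and ρ₁ > C−1, the function Φ(z) = (1/z)·(ρ₁+ρ₂z)^C/C! − Σ_{m=0}^{C−1} (ρ₁+ρ₂z)^m/m! is strictly positive on (0,∞). -/

import Mathlib

open Real Set

theorem stmt_5 (C : ℕ) (hC : 2 ≤ C) (ρ₁ ρ₂ : ℝ) (hρ₂ : (C : ℝ) < ρ₂)
    (hρ₁ : (C : ℝ) - 1 < ρ₁)
    (Φ : ℝ → ℝ)
    (hΦ : ∀ z : ℝ, Φ z = (1 / z) * (ρ₁ + ρ₂ * z) ^ C / (Nat.factorial C : ℝ)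
        - ∑ m ∈ Finset.range C, (ρ₁ + ρ₂ * z) ^ m / (Nat.factorial m : ℝ)) :
    ∀ z : ℝ, 0 < z → 0 < Φ z := by
  intro z hz
  rw [hΦ z, sub_pos]
  set x := ρ₁ + ρ₂ * z with hxdef
  have hC2 : (2:ℝ) ≤ (C:ℝ) := by exact_mod_cast hC
  set c : ℝ := (C:ℝ) - 1 with hcdef
  have hc1 : (1:ℝ) ≤ c := by simp [hcdef]; linarith
  have hxgt : c + (C:ℝ) * z < x := by
    have h2 : (C:ℝ) * z < ρ₂ * z := by nlinarith
    simp only [hxdef, hcdef]; nlinarith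
  have hx1 : c < x := by nlinarith
  have hx0 : (0:ℝ) < x := by linarith
  have key : ∀ n, 1 ≤ n → n ≤ C →
      (x - c) * (∑ m ∈ Finset.range n, x ^ m / (Nat.factorial m : ℝ))
        ≤ x ^ n / (Nat.factorial (n-1) : ℝ) := by
    intro n hn
    induction n, hn using Nat.le_induction with
    | base =>
      intro _
      simp [Nat.factorial]
      linarith
    | succ k hk ih =>
      intro hkC
      have ihk := ih (by omega)
      rw [Finset.sum_range_succ]
      have hfac : (Nat.factorial k : ℝ) = (k : ℝ) * (Nat.factorial (k-1) : ℝ) := by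
        have := Nat.mul_factorial_pred (by omega : k ≠ 0)
        exact_mod_cast this.symm
      have hfk1 : (0:ℝ) < (Nat.factorial (k-1) : ℝ) := by
        exact_mod_cast Nat.factorial_pos _
      have hkpos : (0:ℝ) < (k:ℝ) := by exact_mod_cast (by omega : 0 < k)
      have hrw : x ^ k / (Nat.factorial (k-1) : ℝ)
          = (k:ℝ) * (x ^ k / (Nat.factorial k : ℝ)) := by
        rw [hfac]; field_simp
      rw [hrw] at ihk
      have hkc : (k:ℝ) ≤ c := by
        have : (k:ℝ) + 1 ≤ (C:ℝ) := by exact_mod_cast hkC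
        simp [hcdef]; linarith
      have hppos : (0:ℝ) ≤ x ^ k / (Nat.factorial k : ℝ) := by positivity
      have hsimp : k + 1 - 1 = k := by omega
      rw [hsimp]
      have hxp : x ^ (k+1) = x * x ^ k := by ring
      rw [hxp]
      set p := x ^ k / (Nat.factorial k : ℝ) with hp
      have hxk : x * x ^ k / (Nat.factorial k : ℝ) = x * p := by
        rw [hp]; ring
      rw [hxk]
      nlinarith [mul_nonneg (sub_nonneg.mpr hkc) hppos]
  have keyC := key C (by omega) le_rfl
  set S := ∑ m ∈ Finset.range C, x ^ m / (Nat.factorial m : ℝ) with hS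
  have hSpos : 0 < S := by
    rw [hS]
    apply Finset.sum_pos (fun m _ => by positivity)
    simp; omega
  have hfCC : (Nat.factorial C : ℝ) = (C:ℝ) * (Nat.factorial (C-1) : ℝ) := by
    have := Nat.mul_factorial_pred (by omega : C ≠ 0)
    exact_mod_cast this.symm
  have hfC1 : (0:ℝ) < (Nat.factorial (C-1) : ℝ) := by exact_mod_cast Nat.factorial_pos _
  have hCpos : (0:ℝ) < (C:ℝ) := by linarith
  have h1 : (z * (C:ℝ)) * S < (x - c) * S := by
    apply mul_lt_mul_of_pos_right _ hSpos
    linarith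
  have h2 : (z * (C:ℝ)) * S < x ^ C / (Nat.factorial (C-1) : ℝ) := lt_of_lt_of_le h1 keyC
  have h3 : S < x ^ C / (Nat.factorial (C-1) : ℝ) / (z * (C:ℝ)) := by
    rw [lt_div_iff₀ (by positivity)]
    linarith [h2]
  calc S < x ^ C / (Nat.factorial (C-1) : ℝ) / (z * (C:ℝ)) := h3
    _ = 1 / z * x ^ C / (Nat.factorial C : ℝ) := by
        rw [hfCC]; field_simp
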